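/- Let Y and Δ be positive semidefinite operators on a finite-dimensional complex Hilbert space and let π̃ be a density matrix with π̃ ≤ Y + Δ. Let T := Y^{1/2}·((Y+Δ)^{1/2})^{+}, where ((Y+Δ)^{1/2})^{+} denotes the Moore–Penrose pseudoinverse of (Y+Δ)^{1/2}. Then T·π̃·T† ≤ Y and tr[(I − T†T)·π̃] ≤ tr(Δ); in particular tr[T†T·π̃] ≥ 1 − tr(Δ). -/

import Mathlib

open scoped BigOperators Kronecker ComplexOrder

noncomputable section

namespace EquivEnsembles

/-! ### Generic linear-algebraic notions -/

variable {ι : Type*} [Fintype ι] [DecidableEq ι]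

/-- The operator norm of a matrix, via its action on Euclidean space. -/
def opNorm (A : Matrix ι ι ℂ) : ℝ := ‖Matrix.toEuclideanCLM (𝕜 := ℂ) A‖

/-- The square root of a positive semidefinite matrix, as `Matrix.PosSemidef.sqrt` was defined
in Mathlib of December 2024 (removed since). -/
protected def _root_.Matrix.PosSemidef.sqrt {n 𝕜 : Type*} [Fintype n] [RCLike 𝕜] [DecidableEq n]
    {A : Matrix n n 𝕜} (hA : A.PosSemidef) : Matrix n n 𝕜 :=
  (hA.1.eigenvectorUnitary : Matrix n n 𝕜) *
    Matrix.diagonal (fun i => ((Real.sqrt (hA.1.eigenvalues i) : ℝ) : 𝕜)) *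
    (star hA.1.eigenvectorUnitary : Matrix n n 𝕜)

/-- The trace norm `‖A‖₁ = tr √(AᴴA)` of a matrix. -/
def traceNorm (A : Matrix ι ι ℂ) : ℝ :=
  ((Matrix.posSemidef_conjTranspose_mul_self A).sqrt).trace.re

/-- A density matrix: positive semidefinite with unit trace. -/
def IsDensity (ρ : Matrix ι ι ℂ) : Prop := ρ.PosSemidef ∧ ρ.trace = 1

/-- Functional calculus for (Hermitian) matrices, via the spectral theorem;
junk value `0` on non-Hermitian matrices. -/
def mfun (f : ℝ → ℝ) (A : Matrix ι ι ℂ) : Matrix ι ι ℂ :=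
  if h : A.IsHermitian then
    (h.eigenvectorUnitary : Matrix ι ι ℂ) *
      Matrix.diagonal (fun i => (f (h.eigenvalues i) : ℂ)) *
      (star h.eigenvectorUnitary : Matrix ι ι ℂ)
  else 0

/-- Matrix logarithm, base 2. -/
def mlog2 (A : Matrix ι ι ℂ) : Matrix ι ι ℂ := mfun (Real.logb 2) A

/-- Matrix logarithm, base e. -/
def mln (A : Matrix ι ι ℂ) : Matrix ι ι ℂ := mfun Real.log A

/-- Moore-Penrose pseudoinverse (of a Hermitian matrix; junk value `0` otherwise). -/
def hpinv (A : Matrix ι ι ℂ) : Matrix ι ι ℂ := mfun (fun x => x⁻¹) A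

/-- Quantum relative entropy `S(τ‖ρ) = tr (τ (log τ − log ρ))` (base-2 logarithms). -/
def relEnt (τ ρ : Matrix ι ι ℂ) : ℝ := (τ * (mlog2 τ - mlog2 ρ)).trace.re

/-- Von Neumann entropy (base-2 logarithm). -/
def vnEnt (τ : Matrix ι ι ℂ) : ℝ := -(τ * mlog2 τ).trace.re

/-- Von Neumann entropy (natural logarithm). -/
def vnEntNat (τ : Matrix ι ι ℂ) : ℝ := -(τ * mln τ).trace.re

/-- Max-relative entropy `S_max(τ‖ρ) = min {λ : τ ≤ 2^λ ρ}`. -/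
def smax (τ ρ : Matrix ι ι ℂ) : ℝ :=
  sInf {lam : ℝ | (((2:ℝ) ^ lam) • ρ - τ).PosSemidef}

/-- The Gibbs state `e^{-H/T}/Z(T)` of a Hamiltonian `H` at temperature `T`. -/
def gibbs (H : Matrix ι ι ℂ) (T : ℝ) : Matrix ι ι ℂ :=
  ((NormedSpace.exp ((-(T : ℂ))⁻¹ • H)).trace)⁻¹ • NormedSpace.exp ((-(T : ℂ))⁻¹ • H)

/-- The partition function `Z(T) = tr e^{-H/T}`. -/
def partZ (H : Matrix ι ι ℂ) (T : ℝ) : ℂ := (NormedSpace.exp ((-(T : ℂ))⁻¹ • H)).trace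

/-- Energy density `u(T)` (with `N` sites). -/
def uT (H : Matrix ι ι ℂ) (T : ℝ) (N : ℕ) : ℝ := (H * gibbs H T).trace.re / N

/-- Specific heat capacity `c(T)` (with `N` sites). -/
def cT (H : Matrix ι ι ℂ) (T : ℝ) (N : ℕ) : ℝ :=
  ((H * H * gibbs H T).trace.re - ((H * gibbs H T).trace.re) ^ 2) / (N * T ^ 2)

/-- Entropy density `s(T)` (with `N` sites, natural logarithm). -/
def sT (H : Matrix ι ι ℂ) (T : ℝ) (N : ℕ) : ℝ := vnEntNat (gibbs H T) / N

/-- The rank-one spectral projection `|ν⟩⟨ν|` onto the `ν`-th eigenvector of a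
Hermitian matrix. -/
def eigProj {A : Matrix ι ι ℂ} (hA : A.IsHermitian) (ν : ι) : Matrix ι ι ℂ :=
  (hA.eigenvectorUnitary : Matrix ι ι ℂ) * Matrix.single ν ν 1 *
    (star hA.eigenvectorUnitary : Matrix ι ι ℂ)

/-- The microcanonical index set `M_{e,δ} = {ν : |E_ν − eN| ≤ δ√N}`. -/
def microSet {A : Matrix ι ι ℂ} (hA : A.IsHermitian) (e δ : ℝ) (N : ℕ) : Finset ι :=
  Finset.univ.filter fun ν => |hA.eigenvalues ν - e * N| ≤ δ * Real.sqrt N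

/-- The microcanonical state `τ_{e,δ}`. -/
def microState {A : Matrix ι ι ℂ} (hA : A.IsHermitian) (e δ : ℝ) (N : ℕ) : Matrix ι ι ℂ :=
  (((microSet hA e δ N).card : ℂ))⁻¹ • ∑ ν ∈ microSet hA e δ N, eigProj hA ν

/-- The restricted partition function `Z(T,e,δ) = Σ_{ν ∈ M_{e,δ}} e^{−E_ν/T}`. -/
def partZmicro {A : Matrix ι ι ℂ} (hA : A.IsHermitian) (T e δ : ℝ) (N : ℕ) : ℝ :=
  ∑ ν ∈ microSet hA e δ N, Real.exp (-(hA.eigenvalues ν) / T)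

/-- `τ` is supported on the span of the eigenvectors indexed by `M`. -/
def SupportedOn {A : Matrix ι ι ℂ} (hA : A.IsHermitian) (M : Finset ι)
    (τ : Matrix ι ι ℂ) : Prop :=
  (∑ ν ∈ M, eigProj hA ν) * τ * (∑ ν ∈ M, eigProj hA ν) = τ


/-! ### Many-body systems on a set `V` of sites -/

variable {V : Type*} [Fintype V] [DecidableEq V] {D : ℕ}

/-- Basis configurations of `⊗_{v ∈ V} ℂ^D`. -/
abbrev Cfg (V : Type*) (D : ℕ) := V → Fin D

/-- Basis configurations on a region `X ⊆ V`. -/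
abbrev CfgOn (D : ℕ) {V : Type*} (X : Finset V) := {x : V // x ∈ X} → Fin D

/-- Splitting a configuration into its parts on `X` and on the complement of `X`. -/
def cfgSplit (D : ℕ) (X : Finset V) :
    Cfg V D ≃ ({x : V // x ∈ X} → Fin D) × ({x : V // ¬ x ∈ X} → Fin D) :=
  Equiv.piEquivPiSubtypeProd (fun x => x ∈ X) fun _ => Fin D

/-- The reduced state `ρ_X = tr_{V∖X} ρ` on the region `X`. -/
def reduce (X : Finset V) (ρ : Matrix (Cfg V D) (Cfg V D) ℂ) :
    Matrix (CfgOn D X) (CfgOn D X) ℂ := fun a b =>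
  ∑ h : {x : V // ¬ x ∈ X} → Fin D,
    ρ ((cfgSplit D X).symm (a, h)) ((cfgSplit D X).symm (b, h))

/-- The embedding `P ↦ P ⊗ 𝟙` of an operator on region `X` into the full system. -/
def embed (X : Finset V) (P : Matrix (CfgOn D X) (CfgOn D X) ℂ) :
    Matrix (Cfg V D) (Cfg V D) ℂ :=
  Matrix.submatrix (P ⊗ₖ (1 : Matrix ({x : V // ¬ x ∈ X} → Fin D) ({x : V // ¬ x ∈ X} → Fin D) ℂ))
    (cfgSplit D X) (cfgSplit D X)

/-- An operator acts only on the region `X` if it is of the form `P ⊗ 𝟙`. -/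
def ActsOn (A : Matrix (Cfg V D) (Cfg V D) ℂ) (X : Finset V) : Prop :=
  ∃ P, A = embed X P

/-- The correlation
`cor_ρ(X,Y) = max |tr((P⊗Q)(ρ_{XY} − ρ_X ⊗ ρ_Y))|` over `‖P‖,‖Q‖ ≤ 1` supported on
`X` resp. `Y`; expressed via operators embedded in the full system (for disjoint
`X`, `Y`, `tr((P⊗Q)ρ_{XY}) = tr(P̂ Q̂ ρ)` and `tr((P⊗Q)(ρ_X⊗ρ_Y)) = tr(P̂ρ) tr(Q̂ρ)`). -/
def corr (ρ : Matrix (Cfg V D) (Cfg V D) ℂ) (X Y : Finset V) : ℝ :=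
  sSup {r : ℝ | ∃ (P : Matrix (CfgOn D X) (CfgOn D X) ℂ) (Q : Matrix (CfgOn D Y) (CfgOn D Y) ℂ),
    opNorm P ≤ 1 ∧ opNorm Q ≤ 1 ∧
    r = ‖(embed X P * embed Y Q * ρ).trace -
          (embed X P * ρ).trace * (embed Y Q * ρ).trace‖}

/-- The product state `⊗_{v ∈ V} ρ_v` of single-site states. -/
def prodState (ρs : V → Matrix (Fin D) (Fin D) ℂ) : Matrix (Cfg V D) (Cfg V D) ℂ :=
  fun f g => ∏ v, ρs v (f v) (g v)

/-- The single-site reduced state `ρ_{\{v\}}` as a `D×D` matrix. -/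
def reduce1 (v : V) (ρ : Matrix (Cfg V D) (Cfg V D) ℂ) : Matrix (Fin D) (Fin D) ℂ :=
  fun a b => ∑ h : {x : V // x ≠ v} → Fin D,
    ρ (fun x => if hx : x = v then a else h ⟨x, hx⟩)
      (fun x => if hx : x = v then b else h ⟨x, hx⟩)

/-- The tensor product `⊗_j ρ_j` of states on pairwise disjoint regions `C j`,
as a state on the union of the regions. -/
def tensorOver {M : ℕ} (C : Fin M → Finset V)
    (ρs : ∀ j, Matrix (CfgOn D (C j)) (CfgOn D (C j)) ℂ) :
    Matrix (CfgOn D (Finset.univ.biUnion C)) (CfgOn D (Finset.univ.biUnion C)) ℂ :=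
  fun f g => ∏ j, ρs j
    (fun x => f ⟨x.1, Finset.mem_biUnion.mpr ⟨j, Finset.mem_univ j, x.2⟩⟩)
    (fun x => g ⟨x.1, Finset.mem_biUnion.mpr ⟨j, Finset.mem_univ j, x.2⟩⟩)


/-! ### The lattice `Λ = {1,…,n}^d` -/

/-- A site of the lattice `Λ = {1,…,n}^d`. -/
abbrev Site (d n : ℕ) := Fin d → Fin n

/-- Manhattan distance between two lattice sites. -/
def siteDist {d n : ℕ} (x y : Site d n) : ℕ := ∑ a, ((x a : ℤ) - (y a : ℤ)).natAbs

/-- Distance between two regions of the lattice. -/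
def setDist {d n : ℕ} (X Y : Finset (Site d n)) : ℕ :=
  sInf {m | ∃ x ∈ X, ∃ y ∈ Y, siteDist x y = m}

/-- The ball of radius `k` around site `i` (in Manhattan distance). -/
def ball {d n : ℕ} (i : Site d n) (k : ℕ) : Finset (Site d n) :=
  Finset.univ.filter fun j => siteDist i j ≤ k

/-- The hypercube with edge length `l` and corner `c`. -/
def cube {d n : ℕ} (l : ℕ) (c : Fin d → Fin (n - l + 1)) : Finset (Site d n) :=
  Finset.univ.filter fun x => ∀ a, (c a : ℕ) ≤ (x a : ℕ) ∧ (x a : ℕ) < (c a : ℕ) + l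

/-- The uniform average over all hypercubes of edge length `l` contained in the lattice. -/
def cubeAvg {d n : ℕ} (l : ℕ) (f : Finset (Site d n) → ℝ) : ℝ :=
  (∑ c : Fin d → Fin (n - l + 1), f (cube l c)) / ((n - l + 1) ^ d : ℕ)


/-- The nonnegative real branch of the Lambert `W` function: for `x ≥ 0`,
`W x` is the unique `w ≥ 0` with `w e^w = x`. -/
def lambertW (x : ℝ) : ℝ := sSup {w : ℝ | 0 ≤ w ∧ w * Real.exp w ≤ x}

/-- The quantity `Δ_{k,ξ,z,T}` (with `C` the dimension-dependent constant, `c = c(T)`). -/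
def DeltaBE (C : ℝ) (d k : ℕ) (ξ z T c : ℝ) (N : ℕ) : ℝ :=
  C * (max (k : ℝ) ξ * (z + 1)) ^ (2 * d) / Real.sqrt (T ^ 2 * c) *
    max (1 / (max (k : ℝ) ξ * (z + 1) * Real.log N)) (1 / (T ^ 2 * c))


/-! ### Local Hamiltonians and decaying correlations on the lattice -/

variable {d n D : ℕ}

/-- The state `ρ` has `(ξ,z)`-exponentially decaying correlations. -/
def HasDecay (ρ : Matrix (Cfg (Site d n) D) (Cfg (Site d n) D) ℂ) (ξ z : ℝ) : Prop :=
  ∀ X Y : Finset (Site d n), 0 < setDist X Y →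
    corr ρ X Y ≤ ((n ^ d : ℕ) : ℝ) ^ z * Real.exp (-(setDist X Y : ℝ) / ξ)

/-- The family `Hloc` of local terms is a `k`-local Hamiltonian: each term has norm
at most one and acts only on sites at distance at most `k` from its center. -/
def IsKLocal (Hloc : Site d n → Matrix (Cfg (Site d n) D) (Cfg (Site d n) D) ℂ)
    (k : ℕ) : Prop :=
  ∀ i, opNorm (Hloc i) ≤ 1 ∧ ActsOn (Hloc i) (ball i k)


/-! ### Miscellaneous -/

/-- Reduction of a state on a dependent tensor product `⊗_j H_{A_j}` to the `j`-th factor. -/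
def reduceAt {M : ℕ} {ι : Fin M → Type*} [∀ j, Fintype (ι j)] [∀ j, DecidableEq (ι j)]
    (j : Fin M) (π : Matrix (∀ i, ι i) (∀ i, ι i) ℂ) : Matrix (ι j) (ι j) ℂ :=
  fun a b => ∑ f : ∀ i, ι i, ∑ g : ∀ i, ι i,
    if f j = a ∧ g j = b ∧ ∀ i, i ≠ j → f i = g i then π f g else 0

/-- The tensor product `ρ₁ ⊗ ⋯ ⊗ ρ_M` on a dependent tensor product `⊗_j H_{A_j}`. -/
def prodDep {M : ℕ} {ι : Fin M → Type*} [∀ j, Fintype (ι j)] [∀ j, DecidableEq (ι j)]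
    (ρs : ∀ j, Matrix (ι j) (ι j) ℂ) : Matrix (∀ i, ι i) (∀ i, ι i) ℂ :=
  fun f g => ∏ j, ρs j (f j) (g j)

/-- The pure state `|ψ⟩⟨ψ|` where `ψ = Σ_{ν ∈ M} c_ν |ν⟩` is the vector of the span of
the eigenvectors `{|ν⟩ : ν ∈ M}` with coordinate vector `c`. -/
def pureFromCoords {ι : Type*} [Fintype ι] [DecidableEq ι] {A : Matrix ι ι ℂ}
    (hA : A.IsHermitian) (M : Finset ι) (c : EuclideanSpace ℂ {ν // ν ∈ M}) :
    Matrix ι ι ℂ :=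
  Matrix.vecMulVec
    (fun x => ∑ ν : {ν // ν ∈ M}, c ν * (hA.eigenvectorUnitary : Matrix ι ι ℂ) x ν.1)
    (fun y => starRingEnd ℂ
      (∑ ν : {ν // ν ∈ M}, c ν * (hA.eigenvectorUnitary : Matrix ι ι ℂ) y ν.1))



section Aux
variable {κ : Type*} [Fintype κ] [DecidableEq κ]

lemma mfun_eq {A : Matrix κ κ ℂ} (hA : A.IsHermitian) (f : ℝ → ℝ) :
    mfun f A = (hA.eigenvectorUnitary : Matrix κ κ ℂ) *
      Matrix.diagonal (fun i => (f (hA.eigenvalues i) : ℂ)) *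
      (star hA.eigenvectorUnitary : Matrix κ κ ℂ) := dif_pos hA

lemma star_mul_self_eigen {A : Matrix κ κ ℂ} (hA : A.IsHermitian) :
    star (hA.eigenvectorUnitary : Matrix κ κ ℂ) * (hA.eigenvectorUnitary : Matrix κ κ ℂ) = 1 := by
  simpa using congrArg (Subtype.val) (star_mul_self hA.eigenvectorUnitary)

lemma mul_star_self_eigen {A : Matrix κ κ ℂ} (hA : A.IsHermitian) :
    (hA.eigenvectorUnitary : Matrix κ κ ℂ) * star (hA.eigenvectorUnitary : Matrix κ κ ℂ) = 1 := by
  simpa using congrArg (Subtype.val) (mul_star_self hA.eigenvectorUnitary)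

lemma mfun_eq' {A : Matrix κ κ ℂ} (hA : A.IsHermitian) (f : ℝ → ℝ) :
    mfun f A = (hA.eigenvectorUnitary : Matrix κ κ ℂ) *
      Matrix.diagonal (fun i => (f (hA.eigenvalues i) : ℂ)) *
      star (hA.eigenvectorUnitary : Matrix κ κ ℂ) := by
  rw [mfun_eq hA]

lemma conj_mul_conj (U A B : Matrix κ κ ℂ) (hU : star U * U = 1) :
    (U * A * star U) * (U * B * star U) = U * (A * B) * star U := by
  calc (U * A * star U) * (U * B * star U)
      = U * (A * ((star U * U) * (B * star U))) := by simp only [Matrix.mul_assoc]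
    _ = U * (A * (B * star U)) := by rw [hU, Matrix.one_mul]
    _ = U * (A * B) * star U := by simp only [Matrix.mul_assoc]

lemma mfun_mul {A : Matrix κ κ ℂ} (hA : A.IsHermitian) (f g : ℝ → ℝ) :
    mfun f A * mfun g A = mfun (fun x => f x * g x) A := by
  rw [mfun_eq' hA, mfun_eq' hA, mfun_eq' hA,
    conj_mul_conj _ _ _ (star_mul_self_eigen hA), Matrix.diagonal_mul_diagonal]
  push_cast
  rfl

lemma mfun_id {A : Matrix κ κ ℂ} (hA : A.IsHermitian) : mfun (fun x => x) A = A := by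
  rw [mfun_eq hA]; exact hA.spectral_theorem.symm

lemma mfun_one {A : Matrix κ κ ℂ} (hA : A.IsHermitian) : mfun (fun _ => 1) A = 1 := by
  rw [mfun_eq' hA]
  simp [Matrix.diagonal_one, mul_star_self_eigen hA]

lemma mfun_sub {A : Matrix κ κ ℂ} (hA : A.IsHermitian) (f g : ℝ → ℝ) :
    mfun f A - mfun g A = mfun (fun x => f x - g x) A := by
  rw [mfun_eq' hA, mfun_eq' hA, mfun_eq' hA, ← Matrix.sub_mul, ← Matrix.mul_sub,
    Matrix.diagonal_sub]
  push_cast; rfl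

lemma mfun_isHermitian {A : Matrix κ κ ℂ} (hA : A.IsHermitian) (f : ℝ → ℝ) :
    (mfun f A).IsHermitian := by
  rw [mfun_eq' hA]
  unfold Matrix.IsHermitian
  simp only [Matrix.conjTranspose_mul, Matrix.diagonal_conjTranspose, Matrix.star_eq_conjTranspose]
  simp [Matrix.mul_assoc, Pi.star_def, Complex.conj_ofReal]

lemma mfun_posSemidef {A : Matrix κ κ ℂ} (hA : A.IsHermitian) {f : ℝ → ℝ}
    (hf : ∀ x, 0 ≤ f x) : (mfun f A).PosSemidef := by
  rw [mfun_eq' hA]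
  have hd : (Matrix.diagonal (fun i => (f (hA.eigenvalues i) : ℂ))).PosSemidef :=
    Matrix.PosSemidef.diagonal fun i => by
      simpa only [Pi.zero_apply] using Complex.zero_le_real.mpr (hf _)
  simpa [Matrix.star_eq_conjTranspose] using
    hd.mul_mul_conjTranspose_same (hA.eigenvectorUnitary : Matrix κ κ ℂ)

lemma psd_sqrt_eq_mfun {A : Matrix κ κ ℂ} (hA : A.PosSemidef) :
    hA.sqrt = mfun Real.sqrt A := by
  rw [mfun_eq hA.1]; rfl

lemma _root_.Matrix.PosSemidef.posSemidef_sqrt {A : Matrix κ κ ℂ} (hA : A.PosSemidef) :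
    hA.sqrt.PosSemidef :=
  by rw [psd_sqrt_eq_mfun hA]; exact mfun_posSemidef hA.1 Real.sqrt_nonneg

lemma _root_.Matrix.PosSemidef.sqrt_mul_self {A : Matrix κ κ ℂ} (hA : A.PosSemidef) :
    hA.sqrt * hA.sqrt = A := by
  rw [psd_sqrt_eq_mfun hA, mfun_mul hA.1]
  conv_rhs => rw [← mfun_id hA.1]
  rw [mfun_eq' hA.1, mfun_eq' hA.1]
  congr 3
  funext i
  rw [Real.mul_self_sqrt (hA.eigenvalues_nonneg i)]

lemma trace_re_nonneg {A : Matrix κ κ ℂ} (hA : A.PosSemidef) : 0 ≤ A.trace.re := by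
  exact (Complex.nonneg_iff.mp hA.trace_nonneg).1

lemma trace_mul_re_nonneg {A B : Matrix κ κ ℂ} (hA : A.PosSemidef) (hB : B.PosSemidef) :
    0 ≤ (A * B).trace.re := by
  have h1 : (hA.sqrt * B * hA.sqrt).PosSemidef := by
    have := hB.conjTranspose_mul_mul_same hA.sqrt
    rwa [hA.posSemidef_sqrt.isHermitian.eq] at this
  have h2 : (hA.sqrt * B * hA.sqrt).trace = (A * B).trace := by
    rw [Matrix.trace_mul_comm, ← Matrix.mul_assoc, hA.sqrt_mul_self]
  rw [← h2]
  exact trace_re_nonneg h1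




lemma mfun_mul_self {A : Matrix κ κ ℂ} (hA : A.IsHermitian) (f : ℝ → ℝ) :
    mfun f A * A = mfun (fun x => f x * x) A := by
  calc mfun f A * A = mfun f A * mfun (fun x => x) A := by rw [mfun_id hA]
    _ = mfun (fun x => f x * x) A := mfun_mul hA _ _

lemma mfun_self_mul {A : Matrix κ κ ℂ} (hA : A.IsHermitian) (f : ℝ → ℝ) :
    A * mfun f A = mfun (fun x => x * f x) A := by
  calc A * mfun f A = mfun (fun x => x) A * mfun f A := by rw [mfun_id hA]
    _ = mfun (fun x => x * f x) A := mfun_mul hA _ _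

open scoped Matrix in
lemma psd_neg_eq_zero {X : Matrix κ κ ℂ} (hX : X.PosSemidef) (hX' : (-X).PosSemidef) :
    X = 0 := by
  have h : ∀ x, X *ᵥ x = 0 := by
    intro x
    have h1 := hX.dotProduct_mulVec_nonneg x
    have h2 := hX'.dotProduct_mulVec_nonneg x
    rw [Matrix.neg_mulVec, dotProduct_neg, neg_nonneg] at h2
    exact (hX.dotProduct_mulVec_zero_iff x).mp (le_antisymm h2 h1)
  ext i j
  have := congr_fun (h (Pi.single j 1)) i
  simpa [Matrix.mulVec_single] using this

lemma hpinv_eq (A : Matrix κ κ ℂ) : hpinv A = mfun (fun x => x⁻¹) A := rfl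


end Aux

open scoped Matrix

/-- first part of the proof of Lemma 5: properties of the operator
`T = Y^{1/2} ((Y+Δ)^{1/2})⁺`. -/
theorem statement_12 {ι : Type*} [Fintype ι] [DecidableEq ι]
    (Y Δ πt : Matrix ι ι ℂ) (hY : Y.PosSemidef) (hΔ : Δ.PosSemidef)
    (hπt : IsDensity πt) (hle : (Y + Δ - πt).PosSemidef)
    (T : Matrix ι ι ℂ) (hT : T = hY.sqrt * hpinv (hY.add hΔ).sqrt) :
    (Y - T * πt * Tᴴ).PosSemidef ∧
    ((1 - Tᴴ * T) * πt).trace.re ≤ Δ.trace.re ∧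
    1 - Δ.trace.re ≤ (Tᴴ * T * πt).trace.re := by
  obtain ⟨hπ, hπtr⟩ := hπt
  obtain ⟨S, hSdef⟩ : ∃ S, S = (hY.add hΔ).sqrt := ⟨_, rfl⟩
  obtain ⟨R, hRdef⟩ : ∃ R, R = hY.sqrt := ⟨_, rfl⟩
  rw [← hSdef, ← hRdef] at hT
  obtain ⟨P, hPdef⟩ : ∃ P, P = hpinv S := ⟨_, rfl⟩
  rw [← hPdef] at hT
  have hSpsd : S.PosSemidef := hSdef ▸ (hY.add hΔ).posSemidef_sqrt
  have hSH : S.IsHermitian := hSpsd.isHermitian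
  have hSS : S * S = Y + Δ := by rw [hSdef]; exact (hY.add hΔ).sqrt_mul_self
  have hRpsd : R.PosSemidef := hRdef ▸ hY.posSemidef_sqrt
  have hRH : Rᴴ = R := hRpsd.isHermitian
  have hRR : R * R = Y := by rw [hRdef]; exact hY.sqrt_mul_self
  have hPH : Pᴴ = P := by rw [hPdef, hpinv_eq]; exact mfun_isHermitian hSH _
  obtain ⟨Pi1, hPidef⟩ : ∃ Pi1, Pi1 = mfun (fun x : ℝ => x⁻¹ * x) S := ⟨_, rfl⟩
  have hq01 : ∀ x : ℝ, x⁻¹ * x = 0 ∨ x⁻¹ * x = 1 := by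
    intro x
    rcases eq_or_ne x 0 with h | h
    · left; simp [h]
    · right; simp [inv_mul_cancel₀ h]
  have hPS : P * S = Pi1 := by
    rw [hPdef, hpinv_eq, hPidef]; exact mfun_mul_self hSH _
  have hSP : S * P = Pi1 := by
    rw [hPdef, hpinv_eq, hPidef, mfun_self_mul hSH]
    have h : (fun x : ℝ => x * x⁻¹) = fun x : ℝ => x⁻¹ * x := funext fun x => mul_comm _ _
    rw [h]
  have hPiPi : Pi1 * Pi1 = Pi1 := by
    rw [hPidef, mfun_mul hSH]
    have h : (fun x : ℝ => x⁻¹ * x * (x⁻¹ * x)) = fun x : ℝ => x⁻¹ * x := by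
      funext x
      rcases hq01 x with h | h <;> rw [h] <;> norm_num
    rw [h]
  have hPiS : Pi1 * S = S := by
    rw [hPidef, mfun_mul_self hSH]
    have h : (fun x : ℝ => x⁻¹ * x * x) = fun x : ℝ => x := by
      funext x
      rcases eq_or_ne x 0 with h | h
      · simp [h]
      · rw [inv_mul_cancel₀ h, one_mul]
    rw [h, mfun_id hSH]
  have hPipsd : Pi1.PosSemidef := by
    rw [hPidef]
    exact mfun_posSemidef hSH fun x => by rcases hq01 x with h | h <;> rw [h] <;> norm_num
  obtain ⟨Q, hQdef⟩ : ∃ Q : Matrix ι ι ℂ, Q = 1 - Pi1 := ⟨_, rfl⟩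
  have hQm : Q = mfun (fun x : ℝ => 1 - x⁻¹ * x) S := by
    rw [hQdef, hPidef]
    calc (1 : Matrix ι ι ℂ) - mfun (fun x : ℝ => x⁻¹ * x) S
        = mfun (fun _ => 1) S - mfun (fun x : ℝ => x⁻¹ * x) S := by rw [mfun_one hSH]
      _ = mfun (fun x : ℝ => 1 - x⁻¹ * x) S := mfun_sub hSH _ _
  have hQpsd : Q.PosSemidef := by
    rw [hQm]
    exact mfun_posSemidef hSH fun x => by rcases hq01 x with h | h <;> rw [h] <;> norm_num
  have hQH : Qᴴ = Q := hQpsd.isHermitian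
  have hQS : Q * S = 0 := by rw [hQdef, Matrix.sub_mul, Matrix.one_mul, hPiS, sub_self]
  have hPi1Q : Pi1 = 1 - Q := by rw [hQdef, sub_sub_cancel]
  -- support of πt
  have hQYD : Q * (Y + Δ) * Q = 0 := by
    rw [← hSS, ← Matrix.mul_assoc, hQS, Matrix.zero_mul, Matrix.zero_mul]
  have hQπQpsd : (Q * πt * Q).PosSemidef := by
    have := hπ.mul_mul_conjTranspose_same Q; rwa [hQH] at this
  have hneg : (-(Q * πt * Q)).PosSemidef := by
    have h1 := hle.mul_mul_conjTranspose_same Q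
    rw [hQH] at h1
    have h2 : Q * (Y + Δ - πt) * Q = -(Q * πt * Q) := by
      rw [Matrix.mul_sub, Matrix.sub_mul, hQYD, zero_sub]
    rwa [h2] at h1
  have hQπQ : Q * πt * Q = 0 := psd_neg_eq_zero hQπQpsd hneg
  have hQt : Q * hπ.sqrt = 0 := by
    apply Matrix.self_mul_conjTranspose_eq_zero.mp
    have hth : (hπ.sqrt)ᴴ = hπ.sqrt := hπ.posSemidef_sqrt.isHermitian
    rw [Matrix.conjTranspose_mul, hth, hQH]
    calc Q * hπ.sqrt * (hπ.sqrt * Q) = Q * (hπ.sqrt * hπ.sqrt) * Q := by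
          simp only [Matrix.mul_assoc]
      _ = Q * πt * Q := by rw [hπ.sqrt_mul_self]
      _ = 0 := hQπQ
  have hQπ : Q * πt = 0 := by
    rw [← hπ.sqrt_mul_self, ← Matrix.mul_assoc, hQt, Matrix.zero_mul]
  have hPiπ : Pi1 * πt = πt := by
    rw [hPi1Q, Matrix.sub_mul, Matrix.one_mul, hQπ, sub_zero]
  -- conjugation identities
  have hTH : Tᴴ = P * R := by rw [hT, Matrix.conjTranspose_mul, hPH, hRH]
  have hPYDP : P * (Y + Δ) * P = Pi1 := by
    rw [← hSS, ← Matrix.mul_assoc, hPS, Matrix.mul_assoc, hSP, hPiPi]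
  have hPYP : P * Y * P = Pi1 - P * Δ * P := by
    rw [← hPYDP, Matrix.mul_add, Matrix.add_mul, add_sub_cancel_right]
  -- Part 1
  have hA1 : (Pi1 - P * πt * P).PosSemidef := by
    have h1 := hle.mul_mul_conjTranspose_same P
    rw [hPH] at h1
    have h2 : P * (Y + Δ - πt) * P = Pi1 - P * πt * P := by
      rw [Matrix.mul_sub, Matrix.sub_mul, hPYDP]
    rwa [h2] at h1
  have h1m : ((1 : Matrix ι ι ℂ) - P * πt * P).PosSemidef := by
    have h := hQpsd.add hA1
    rwa [hQdef, sub_add_sub_cancel] at h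
  have part1 : (Y - T * πt * Tᴴ).PosSemidef := by
    have hcong := h1m.mul_mul_conjTranspose_same R
    rw [hRH] at hcong
    have heq : R * (1 - P * πt * P) * R = Y - T * πt * Tᴴ := by
      rw [hTH, hT, Matrix.mul_sub, Matrix.mul_one, Matrix.sub_mul, hRR]
      congr 1
      simp only [Matrix.mul_assoc]
    rwa [heq] at hcong
  -- Parts 2 and 3
  have hTT : Tᴴ * T = P * Y * P := by
    rw [hTH, hT, ← hRR]
    simp only [Matrix.mul_assoc]
  have hPΔP : (P * Δ * P).PosSemidef := by
    have := hΔ.mul_mul_conjTranspose_same P; rwa [hPH] at this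
  have hkey : (P * Δ * P * πt).trace.re ≤ Δ.trace.re := by
    have h1 : 0 ≤ ((P * Δ * P) * (Y + Δ - πt)).trace.re := trace_mul_re_nonneg hPΔP hle
    have h2 : ((P * Δ * P) * (Y + Δ - πt)).trace
        = ((P * Δ * P) * (Y + Δ)).trace - ((P * Δ * P) * πt).trace := by
      rw [Matrix.mul_sub, Matrix.trace_sub]
    have h3 : ((P * Δ * P) * (Y + Δ)).trace = (Δ * Pi1).trace := by
      calc ((P * Δ * P) * (Y + Δ)).trace = (P * (Δ * P * (Y + Δ))).trace := by
            congr 1; simp only [Matrix.mul_assoc]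
        _ = ((Δ * P * (Y + Δ)) * P).trace := Matrix.trace_mul_comm _ _
        _ = (Δ * (P * (Y + Δ) * P)).trace := by congr 1; simp only [Matrix.mul_assoc]
        _ = (Δ * Pi1).trace := by rw [hPYDP]
    have h4 : 0 ≤ (Δ * Q).trace.re := trace_mul_re_nonneg hΔ hQpsd
    have h5 : (Δ * Q).trace = Δ.trace - (Δ * Pi1).trace := by
      rw [hQdef, Matrix.mul_sub, Matrix.mul_one, Matrix.trace_sub]
    have h2' := congrArg Complex.re h2
    have h5' := congrArg Complex.re h5
    rw [h3, Complex.sub_re] at h2'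
    rw [Complex.sub_re] at h5'
    linarith
  have htr2 : (Tᴴ * T * πt).trace.re = 1 - (P * Δ * P * πt).trace.re := by
    have h : (Tᴴ * T * πt).trace = 1 - (P * Δ * P * πt).trace := by
      rw [hTT, hPYP, Matrix.sub_mul, Matrix.trace_sub, hPiπ, hπtr]
    have h' := congrArg Complex.re h
    rwa [Complex.sub_re, Complex.one_re] at h'
  have htr3 : ((1 - Tᴴ * T) * πt).trace.re = 1 - (Tᴴ * T * πt).trace.re := by
    have h : ((1 - Tᴴ * T) * πt).trace = 1 - (Tᴴ * T * πt).trace := by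
      rw [Matrix.sub_mul, Matrix.one_mul, Matrix.trace_sub, hπtr]
    have h' := congrArg Complex.re h
    rwa [Complex.sub_re, Complex.one_re] at h'
  refine ⟨part1, ?_, ?_⟩
  · rw [htr3, htr2]; linarith
  · rw [htr2]; linarith
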